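/- Let G be a linearly ordered abelian group and p a prime. Then the set X = {g ∈ G : every x ∈ G with 0 ≤ x ≤ |g| lies in pG} is a convex subgroup of G, X is p-divisible (X ⊆ pX), and X contains every p-divisible convex subgroup of G; hence X is the largest p-divisible convex subgroup of G. -/

import Mathlib

/-- `nH = {n • h : h ∈ H}` as a subgroup. -/
def smulSub {G : Type*} [AddCommGroup G] (n : ℕ) (H : AddSubgroup G) : AddSubgroup G :=
  AddSubgroup.map (n • AddMonoidHom.id G) H

/-- A subgroup `H` of a linearly ordered abelian group is convex if
`0 ≤ g ≤ h` and `h ∈ H` imply `g ∈ H`. -/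
def IsConvexSubgroup {G : Type*} [AddCommGroup G] [LinearOrder G] [IsOrderedAddMonoid G] (H : AddSubgroup G) : Prop :=
  ∀ g h : G, 0 ≤ g → g ≤ h → h ∈ H → g ∈ H

lemma mem_smulSub {G : Type*} [AddCommGroup G] {n : ℕ} {H : AddSubgroup G} {g : G} :
    g ∈ smulSub n H ↔ ∃ h ∈ H, n • h = g := by
  simp [smulSub]

/-- For a linearly ordered abelian group `G` and a prime `p`, the set
`X = {g : every x with 0 ≤ x ≤ |g| lies in pG}` is a convex subgroup of `G`, it is
`p`-divisible (`X ⊆ pX`), and it contains every `p`-divisible convex subgroup; hence it is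
the largest `p`-divisible convex subgroup of `G`. -/
theorem largest_pdivisible_convex_subgroup {G : Type*} [AddCommGroup G] [LinearOrder G] [IsOrderedAddMonoid G]
    (p : ℕ) (hp : p.Prime) :
    ∃ X : AddSubgroup G,
      (X : Set G) = {g : G | ∀ x : G, 0 ≤ x → x ≤ |g| → x ∈ smulSub p (⊤ : AddSubgroup G)} ∧
      IsConvexSubgroup X ∧
      X ≤ smulSub p X ∧
      ∀ D : AddSubgroup G, IsConvexSubgroup D → D ≤ smulSub p D → D ≤ X := by
  set pG := smulSub p (⊤ : AddSubgroup G) with hpG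
  refine ⟨{
    carrier := {g : G | ∀ x : G, 0 ≤ x → x ≤ |g| → x ∈ pG}
    zero_mem' := by
      intro x hx hx'
      simp only [abs_zero] at hx'
      have : x = 0 := le_antisymm hx' hx
      rw [this]; exact pG.zero_mem
    neg_mem' := by
      intro g hg x hx hx'
      exact hg x hx (by simpa [abs_neg] using hx')
    add_mem' := by
      intro a b ha hb x hx hx'
      have hx'' : x ≤ |a| + |b| := hx'.trans (abs_add_le a b)
      rcases le_or_gt x |a| with h | h
      · exact ha x hx h
      · have h1 : |a| ∈ pG := ha |a| (abs_nonneg a) le_rfl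
        have h2 : x - |a| ∈ pG :=
          hb (x - |a|) (sub_nonneg.mpr h.le) (sub_le_iff_le_add'.mpr hx'')
        have := AddSubgroup.add_mem pG h1 h2
        simpa using this }, rfl, ?_, ?_, ?_⟩
  · intro g h hg hgh hh x hx hx'
    exact hh x hx (hx'.trans (by rw [abs_of_nonneg hg, abs_of_nonneg (hg.trans hgh)] at *; exact hgh))
  · intro g hg
    have habs : |g| ∈ pG := hg |g| (abs_nonneg g) le_rfl
    rw [hpG, mem_smulSub] at habs
    obtain ⟨y, -, hy⟩ := habs
    have hy0 : 0 ≤ y := (nsmul_nonneg_iff hp.pos.ne').mp (hy ▸ abs_nonneg g)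
    have hyle : y ≤ p • y := by
      calc y = 1 • y := (one_nsmul y).symm
        _ ≤ p • y := nsmul_le_nsmul_left hy0 hp.one_lt.le
    have hymem : ∀ z : G, |z| = y → ∀ x : G, 0 ≤ x → x ≤ |z| → x ∈ pG := by
      intro z hz x hx hx'
      rw [hz] at hx'
      exact hg x hx (hx'.trans (hyle.trans_eq hy))
    rw [mem_smulSub]
    rcases abs_choice g with h | h
    · exact ⟨y, hymem y (abs_of_nonneg hy0) , by rw [hy, h]⟩
    · refine ⟨-y, hymem (-y) (by rw [abs_neg, abs_of_nonneg hy0]), ?_⟩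
      rw [smul_neg, hy, h, neg_neg]
  · intro D hD hDle d hd
    intro x hx hx'
    have habs : |d| ∈ D := by
      rcases abs_choice d with h | h
      · rw [h]; exact hd
      · rw [h]; exact D.neg_mem hd
    have hxD : x ∈ D := hD x |d| hx hx' habs
    have := hDle hxD
    rw [mem_smulSub] at this
    obtain ⟨y, -, hy⟩ := this
    rw [hpG, mem_smulSub]
    exact ⟨y, trivial, hy⟩
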